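/- Let α₀ ∈ ℝ and define f : {(w₋, w, w₊) ∈ ℝ³ : w₊ − w₋ + 2α₀ ≠ 0} → ℝ by f(w₋, w, w₊) := 4(w − w₋ + α₀)(w − w₊ − α₀)/(w₊ − w₋ + 2α₀). Then for every n ∈ ℤ and every (w₋, w, w₊) with w₊ − w₋ + 2α₀ ≠ 0, the identity (w₋ + α₀(n−1))·∂₁f + (w + α₀n)·∂₂f + (w₊ + α₀(n+1))·∂₃f = f holds, where ∂ᵢf is the partial derivative of f in its i-th argument evaluated at (w₋, w, w₊). Equivalently, the non-isospectral flow du_n/dσ₀ = u_n + α₀n commutes with the Volterra-type flow du_n/dε₀ = f(u_{n−1}, u_n, u_{n+1}). -/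

import Mathlib

/-- The Volterra-type characteristic
`f(wm, w, wp) := 4 (w − wm + α₀)(w − wp − α₀)/(wp − wm + 2α₀)`. -/
noncomputable def volterraChar (α₀ wm w wp : ℝ) : ℝ :=
  4 * (w - wm + α₀) * (w - wp - α₀) / (wp - wm + 2 * α₀)

lemma deriv1 (α₀ w wp wm : ℝ) (h : wp - wm + 2 * α₀ ≠ 0) :
    deriv (fun t => volterraChar α₀ t w wp) wm =
      ((-4 * (w - wp - α₀)) * (wp - wm + 2 * α₀) -
        4 * (w - wm + α₀) * (w - wp - α₀) * (-1)) / (wp - wm + 2 * α₀) ^ 2 := by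
  have h1 : HasDerivAt (fun t : ℝ => 4 * (w - t + α₀) * (w - wp - α₀))
      (-4 * (w - wp - α₀)) wm := by
    have := ((hasDerivAt_id wm).const_sub w).add_const α₀
    simpa [mul_comm, mul_assoc, mul_left_comm] using
      ((this.const_mul 4).mul_const (w - wp - α₀))
  have h2 : HasDerivAt (fun t : ℝ => wp - t + 2 * α₀) (-1) wm := by
    simpa using ((hasDerivAt_id wm).const_sub wp).add_const (2 * α₀)
  simpa [volterraChar, Pi.div_def] using (h1.div h2 h).deriv

lemma deriv2 (α₀ wm wp w : ℝ) (h : wp - wm + 2 * α₀ ≠ 0) :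
    deriv (fun t => volterraChar α₀ wm t wp) w =
      (4 * (w - wp - α₀) + 4 * (w - wm + α₀)) / (wp - wm + 2 * α₀) := by
  have h1 : HasDerivAt (fun t : ℝ => 4 * (t - wm + α₀) * (t - wp - α₀))
      (4 * (w - wp - α₀) + 4 * (w - wm + α₀)) w := by
    have a : HasDerivAt (fun t : ℝ => 4 * (t - wm + α₀)) 4 w := by
      simpa using (((hasDerivAt_id w).sub_const wm).add_const α₀).const_mul 4
    have b : HasDerivAt (fun t : ℝ => t - wp - α₀) 1 w := by
      simpa using ((hasDerivAt_id w).sub_const wp).sub_const α₀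
    simpa [mul_comm, mul_assoc, mul_left_comm, Pi.mul_def] using a.mul b
  have := (h1.div_const (wp - wm + 2 * α₀)).deriv
  simpa [volterraChar] using this

lemma deriv3 (α₀ wm w wp : ℝ) (h : wp - wm + 2 * α₀ ≠ 0) :
    deriv (fun t => volterraChar α₀ wm w t) wp =
      ((-(4 * (w - wm + α₀))) * (wp - wm + 2 * α₀) -
        4 * (w - wm + α₀) * (w - wp - α₀) * 1) / (wp - wm + 2 * α₀) ^ 2 := by
  have h1 : HasDerivAt (fun t : ℝ => 4 * (w - wm + α₀) * (w - t - α₀))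
      (-(4 * (w - wm + α₀))) wp := by
    have := (((hasDerivAt_id wp).const_sub w).sub_const α₀).const_mul
      (4 * (w - wm + α₀))
    simpa using this
  have h2 : HasDerivAt (fun t : ℝ => t - wm + 2 * α₀) 1 wp := by
    simpa using ((hasDerivAt_id wp).sub_const wm).add_const (2 * α₀)
  simpa [volterraChar, Pi.div_def] using (h1.div h2 h).deriv

/-- wherever `wp − wm + 2α₀ ≠ 0` one has, for every `n ∈ ℤ`, the
identity `(wm + α₀(n−1)) ∂₁f + (w + α₀ n) ∂₂f + (wp + α₀(n+1)) ∂₃f = f`;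
equivalently, the non-isospectral flow `du_n/dσ₀ = u_n + α₀ n` commutes with the
Volterra-type flow `du_n/dε₀ = f(u_{n−1}, u_n, u_{n+1})`. -/
theorem nonisospectral_commutes_with_volterra (α₀ : ℝ) (n : ℤ) (wm w wp : ℝ)
    (h : wp - wm + 2 * α₀ ≠ 0) :
    (wm + α₀ * ((n : ℝ) - 1)) * deriv (fun t => volterraChar α₀ t w wp) wm +
        (w + α₀ * (n : ℝ)) * deriv (fun t => volterraChar α₀ wm t wp) w +
        (wp + α₀ * ((n : ℝ) + 1)) * deriv (fun t => volterraChar α₀ wm w t) wp =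
      volterraChar α₀ wm w wp := by
  rw [deriv1 α₀ w wp wm h, deriv2 α₀ wm wp w h, deriv3 α₀ wm w wp h, volterraChar]
  simp only [mul_div_assoc']
  rw [div_add_div _ _ (pow_ne_zero 2 h) h, div_add_div _ _ (mul_ne_zero (pow_ne_zero 2 h) h) (pow_ne_zero 2 h), div_eq_div_iff (mul_ne_zero (mul_ne_zero (pow_ne_zero 2 h) h) (pow_ne_zero 2 h)) h]
  ring
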